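/- (Lemma 2, fully dense transition matrices; content established by the paper's proof.) Assume 0 < λ < 1 and that p_{ij}(a) > 0 for all i, j ∈ S and all a ∈ A(i). Then T is strictly monotone in the following strong sense: for all u, v ∈ ℝ^S with u ≤ v and u ≠ v, one has Tu < Tv strictly in every component. In particular, if v ∈ V and Tv ≠ v, then T(Tv) < Tv strictly in every component, so Tv lies in the interior of V. -/
import Mathlib


noncomputable def Tval {S : Type*} [Fintype S] {A : S → Type*}
    [∀ i, Fintype (A i)] [∀ i, Nonempty (A i)]
    (r : ∀ i, A i → ℝ) (p : ∀ i, A i → S → ℝ) (lam : ℝ) (v : S → ℝ) (i : S) : ℝ :=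
  Finset.univ.sup' Finset.univ_nonempty fun a : A i =>
    r i a + lam * ∑ j, p i a j * v j

theorem fully_dense_strict {S : Type*} [Fintype S] [Nonempty S] {A : S → Type*}
    [∀ i, Fintype (A i)] [∀ i, Nonempty (A i)]
    (r : ∀ i, A i → ℝ) (p : ∀ i, A i → S → ℝ) (lam : ℝ)
    (hp : ∀ i (a : A i) (j : S), 0 ≤ p i a j)
    (hp1 : ∀ i (a : A i), ∑ j, p i a j = 1)
    (hlam0 : 0 < lam) (hlam1 : lam < 1)
    (hppos : ∀ i (a : A i) (j : S), 0 < p i a j) :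
    (∀ u v : S → ℝ, (∀ j, u j ≤ v j) → u ≠ v →
      ∀ i, Tval r p lam u i < Tval r p lam v i) ∧
    (∀ v : S → ℝ, (∀ i, Tval r p lam v i ≤ v i) → Tval r p lam v ≠ v →
      ∀ i, Tval r p lam (Tval r p lam v) i < Tval r p lam v i) := by
  have main : ∀ u v : S → ℝ, (∀ j, u j ≤ v j) → u ≠ v →
      ∀ i, Tval r p lam u i < Tval r p lam v i := by
    intro u v hle hne i
    obtain ⟨j0, hj0⟩ : ∃ j0, u j0 < v j0 := by
      by_contra h
      push_neg at h
      exact hne (funext fun j => le_antisymm (hle j) (h j))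
    have key : ∀ a : A i,
        r i a + lam * ∑ j, p i a j * u j < r i a + lam * ∑ j, p i a j * v j := by
      intro a
      have hsum : ∑ j, p i a j * u j < ∑ j, p i a j * v j :=
        Finset.sum_lt_sum (fun j _ => mul_le_mul_of_nonneg_left (hle j) (hp i a j))
          ⟨j0, Finset.mem_univ j0, by
            exact mul_lt_mul_of_pos_left hj0 (hppos i a j0)⟩
      linarith [mul_lt_mul_of_pos_left hsum hlam0]
    rw [Tval, Finset.sup'_lt_iff]
    intro a _
    exact lt_of_lt_of_le (key a)
      (Finset.le_sup' (fun a : A i => r i a + lam * ∑ j, p i a j * v j)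
        (Finset.mem_univ a))
  exact ⟨main, fun v hle hne i => main _ v hle hne i⟩
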